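/- For b > 0 and c > 0, the sequence T_n(b,c)/(b+2\sqrt{c})^n satisfies \liminf_{n\to\infty} n^{1/2} T_n(b,c)/(b+2\sqrt{c})^n > 0; in particular T_n(b,c)^{1/n} \to b+2\sqrt{c}. -/

import Mathlib

open Filter Polynomial Real
open intervalIntegral

noncomputable def T (n : ℕ) (b c : ℝ) : ℝ :=
  ((X ^ 2 + C b * X + C c) ^ n).coeff n

lemma orth (k : ℤ) (hk : k ≠ 0) :
    (∫ θ : ℝ in (-π)..π, Complex.exp (k * θ * Complex.I)) = 0 := by
  have hc : (k : ℂ) * Complex.I ≠ 0 := by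
    simp [Complex.I_ne_zero, Complex.ofReal_ne_zero, hk]
  have := integral_exp_mul_complex (a := -π) (b := π) hc
  have h2 : ∀ x : ℝ, (k:ℂ) * Complex.I * x = k * x * Complex.I := by intro x; ring
  simp only [h2] at this
  rw [this]
  have hsq : Complex.exp ((k:ℂ) * π * Complex.I) * Complex.exp ((k:ℂ) * π * Complex.I) = 1 := by
    rw [← Complex.exp_add]
    have : (k:ℂ) * π * Complex.I + k * π * Complex.I = k * (2 * (π:ℂ) * Complex.I) := by push_cast; ring
    rw [this, Complex.exp_int_mul_two_pi_mul_I]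
  have : Complex.exp ((k:ℂ) * (-π:ℝ) * Complex.I) = Complex.exp ((k:ℂ) * π * Complex.I) := by
    have hneg : (k:ℂ) * (-π:ℝ) * Complex.I = -((k:ℂ) * π * Complex.I) := by
      push_cast; ring
    rw [hneg, Complex.exp_neg, eq_comm]
    exact (inv_eq_of_mul_eq_one_left hsq).symm
  rw [this, sub_self, zero_div]

lemma orth2 (j n : ℕ) :
    (∫ θ : ℝ in (-π)..π, Complex.exp (j * θ * Complex.I) * Complex.exp (-(n * θ * Complex.I)))
      = if j = n then 2 * (π:ℂ) else 0 := by
  have hcomb : ∀ θ : ℝ, Complex.exp (j * θ * Complex.I) * Complex.exp (-(n * θ * Complex.I))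
      = Complex.exp ((((j:ℤ) - (n:ℤ) : ℤ) : ℂ) * θ * Complex.I) := by
    intro θ; rw [← Complex.exp_add]; congr 1; push_cast; ring
  simp only [hcomb]
  by_cases h : j = n
  · subst h
    simp only [sub_self, Int.cast_zero, zero_mul, Complex.exp_zero]
    simp [two_mul]
  · rw [orth _ (by omega), if_neg h]

lemma T_integral (b c : ℝ) (hc : 0 < c) (n : ℕ) :
    T n b c * (2 * π) = ∫ θ : ℝ in (-π)..π, (b + 2 * Real.sqrt c * Real.cos θ) ^ n := by
  set R : ℝ := Real.sqrt c with hRdef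
  have hR : 0 < R := Real.sqrt_pos.2 hc
  have hR2 : (R:ℂ) * (R:ℂ) = (c:ℂ) := by
    rw [← Complex.ofReal_mul]; norm_cast; exact Real.mul_self_sqrt hc.le
  set q : Polynomial ℂ := (X ^ 2 + C (b:ℂ) * X + C (c:ℂ)) ^ n with hq
  have h1 : q.coeff n = ((T n b c : ℝ) : ℂ) := by
    have : q = ((X ^ 2 + C b * X + C c : Polynomial ℝ) ^ n).map (algebraMap ℝ ℂ) := by
      simp [hq, Polynomial.map_pow, Polynomial.map_add, Polynomial.map_mul]
    rw [this, Polynomial.coeff_map]; rfl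
  have h2 : q.natDegree < 2 * n + 1 := by
    have hb : (X ^ 2 + C (b:ℂ) * X + C (c:ℂ)).natDegree ≤ 2 := by
      apply le_trans (Polynomial.natDegree_add_le _ _)
      simp [Polynomial.natDegree_X_pow, Polynomial.natDegree_C]
      apply le_trans (Polynomial.natDegree_add_le _ _)
      simp [Polynomial.natDegree_X_pow]
      apply le_trans (Polynomial.natDegree_C_mul_le _ _)
      simp [Polynomial.natDegree_X]
    calc q.natDegree ≤ n * 2 := le_trans (Polynomial.natDegree_pow_le) (by
          exact Nat.mul_le_mul_left n hb)
    _ < 2 * n + 1 := by omega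
  set z : ℝ → ℂ := fun θ => (R:ℂ) * Complex.exp (θ * Complex.I) with hz
  have h3 : ∀ θ : ℝ, q.eval (z θ) * Complex.exp (-(n * θ * Complex.I))
      = (R:ℂ)^n * (((b + 2 * R * Real.cos θ) ^ n : ℝ) : ℂ) := by
    intro θ
    have hexp : Complex.exp (-((n:ℂ) * θ * Complex.I)) = (Complex.exp (-(θ * Complex.I)))^n := by
      rw [← Complex.exp_nat_mul]; ring_nf
    have heval : q.eval (z θ) = ((z θ)^2 + b * z θ + c)^n := by
      simp [hq, Polynomial.eval_pow]
    rw [heval, hexp, ← mul_pow, Complex.ofReal_pow, ← mul_pow]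
    congr 1
    have hbase : ((z θ)^2 + b * z θ + c) * Complex.exp (-(θ * Complex.I))
        = (R:ℂ) * ((b:ℂ) + 2 * R * Real.cos θ) := by
      have hcos : ((Real.cos θ : ℝ) : ℂ) = (Complex.exp (θ * Complex.I)
          + Complex.exp (-(θ * Complex.I))) / 2 := by
        rw [Complex.ofReal_cos, Complex.cos]
        ring_nf
      have hee : Complex.exp (θ * Complex.I) * Complex.exp (-(θ * Complex.I)) = 1 := by
        rw [← Complex.exp_add]; simp
      have hR2sq : (R:ℂ)^2 = (c:ℂ) := by rw [sq]; exact hR2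
      rw [hcos]
      simp only [hz]
      ring_nf
      linear_combination ((R:ℂ)*(b:ℂ) + (R:ℂ)^2 * Complex.exp (θ * Complex.I)) * hee
        - Complex.exp (-(θ * Complex.I)) * hR2sq
    rw [hbase]; push_cast; ring
  have h4 : (∫ θ : ℝ in (-π)..π, q.eval (z θ) * Complex.exp (-(n * θ * Complex.I)))
      = q.coeff n * (R:ℂ)^n * (2 * (π:ℂ)) := by
    have hrw : ∀ θ : ℝ, q.eval (z θ) * Complex.exp (-(n * θ * Complex.I))
        = ∑ i ∈ Finset.range (2*n+1),
            (q.coeff i * (R:ℂ)^i) * (Complex.exp (i * θ * Complex.I)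
              * Complex.exp (-(n * θ * Complex.I))) := by
      intro θ
      rw [Polynomial.eval_eq_sum_range' h2, Finset.sum_mul]
      refine Finset.sum_congr rfl (fun i _ => ?_)
      simp only [hz, mul_pow, ← Complex.exp_nat_mul]
      ring_nf
    simp only [hrw]
    rw [intervalIntegral.integral_finset_sum]
    · have : ∀ i ∈ Finset.range (2*n+1),
          (∫ θ : ℝ in (-π)..π, (q.coeff i * (R:ℂ)^i) * (Complex.exp (i * θ * Complex.I)
            * Complex.exp (-(n * θ * Complex.I))))
          = (q.coeff i * (R:ℂ)^i) * (if i = n then 2 * (π:ℂ) else 0) := by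
        intro i _
        rw [intervalIntegral.integral_const_mul, orth2]
      rw [Finset.sum_congr rfl this]
      simp only [mul_ite, mul_zero]
      rw [Finset.sum_ite_eq' (Finset.range (2*n+1)) n]
      simp only [Finset.mem_range, if_pos (by omega : n < 2*n+1)]
    · intro i _
      apply Continuous.intervalIntegrable
      fun_prop
  have h5 : (∫ θ : ℝ in (-π)..π, q.eval (z θ) * Complex.exp (-(n * θ * Complex.I)))
      = (R:ℂ)^n * (((∫ θ : ℝ in (-π)..π, (b + 2 * R * Real.cos θ) ^ n : ℝ)) : ℂ) := by
    rw [intervalIntegral.integral_congr (g := fun θ =>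
      (R:ℂ)^n * (((b + 2 * R * Real.cos θ) ^ n : ℝ) : ℂ)) (fun θ _ => h3 θ)]
    rw [intervalIntegral.integral_const_mul, intervalIntegral.integral_ofReal]
  rw [h4, h1] at h5
  have hRn : ((R:ℂ))^n ≠ 0 := pow_ne_zero _ (by exact_mod_cast hR.ne')
  have h6 : ((T n b c : ℝ) : ℂ) * (2 * (π:ℂ))
      = (((∫ θ : ℝ in (-π)..π, (b + 2 * R * Real.cos θ) ^ n : ℝ)) : ℂ) := by
    have h5' : (R:ℂ)^n * (((T n b c : ℝ) : ℂ) * (2 * (π:ℂ)))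
        = (R:ℂ)^n * (((∫ θ : ℝ in (-π)..π, (b + 2 * R * Real.cos θ) ^ n : ℝ)) : ℂ) := by
      linear_combination h5
    exact mul_left_cancel₀ hRn h5'
  have := h6
  rw [show ((2:ℂ) * (π:ℂ)) = (((2 * π : ℝ)):ℂ) by push_cast; ring, ← Complex.ofReal_mul] at this
  exact_mod_cast this

lemma bern (n : ℕ) {x : ℝ} (h0 : 0 ≤ x) (h1 : x ≤ 1) : (1-x)^n ≤ 1/(1+n*x) := by
  have hpos : (0:ℝ) < 1 + n*x := by positivity
  rw [le_div_iff₀ hpos]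
  have h2 : 1 + (n:ℝ)*x ≤ (1+x)^n := by
    have := one_add_mul_le_pow (a := x) (by linarith) n
    linarith
  calc (1-x)^n * (1+n*x) ≤ (1-x)^n * (1+x)^n := by
        apply mul_le_mul_of_nonneg_left h2 (pow_nonneg (by linarith) n)
    _ = ((1-x)*(1+x))^n := by rw [mul_pow]
    _ = (1-x^2)^n := by ring_nf
    _ ≤ 1 := pow_le_one₀ (by nlinarith) (by nlinarith)

lemma globalLB (b c A : ℝ) (hA : A = 2*Real.sqrt c) (n : ℕ) (θ : ℝ) :
    -(|b - A|^n) ≤ (b + A * Real.cos θ)^n := by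
  rcases le_or_gt 0 (b + A * Real.cos θ) with h | h
  · have : (0:ℝ) ≤ (b + A * Real.cos θ)^n := pow_nonneg h n
    have : (0:ℝ) ≤ |b - A|^n := pow_nonneg (abs_nonneg _) n
    linarith
  · have hA0 : 0 ≤ A := by rw [hA]; positivity
    have habs : |b + A * Real.cos θ| ≤ |b - A| := by
      rw [abs_le]
      constructor
      · have h1 : A * Real.cos θ ≥ -A := by nlinarith [Real.neg_one_le_cos θ]
        rcases abs_cases (b - A) with ⟨h2, _⟩ | ⟨h2, _⟩ <;> nlinarith
      · have h1 : A * Real.cos θ ≤ A := by nlinarith [Real.cos_le_one θ]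
        rcases abs_cases (b - A) with ⟨h2, _⟩ | ⟨h2, _⟩ <;> nlinarith
    calc -(|b - A|^n) ≤ -(|b + A * Real.cos θ|^n) := by
          apply neg_le_neg; exact pow_le_pow_left₀ (abs_nonneg _) habs n
      _ ≤ (b + A * Real.cos θ)^n := by
          rw [← abs_pow]; exact neg_abs_le _

set_option maxHeartbeats 1000000 in
lemma lowerBound (b c : ℝ) (hb : 0 < b) (hc : 0 < c) (n : ℕ) (hn : 1 ≤ n) :
    1/(2*π) - Real.sqrt n * (|b - 2*Real.sqrt c| / (b + 2*Real.sqrt c))^n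
      ≤ Real.sqrt n * T n b c / (b + 2*Real.sqrt c)^n := by
  have hπ := Real.pi_pos
  set A : ℝ := 2*Real.sqrt c with hAdef
  have hA : 0 < A := by positivity
  set M : ℝ := b + A with hMdef
  have hM : 0 < M := by positivity
  set r : ℝ := |b - A| with hrdef
  have hr0 : 0 ≤ r := abs_nonneg _
  set sn : ℝ := Real.sqrt n with hsndef
  have hsn1 : 1 ≤ sn := by
    rw [hsndef, show (1:ℝ) = Real.sqrt 1 by simp]
    exact Real.sqrt_le_sqrt (by exact_mod_cast hn)
  have hsn0 : 0 < sn := by linarith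
  set s : ℝ := 1/sn with hsdef
  have hs0 : 0 < s := by positivity
  have hs1 : s ≤ 1 := by rw [hsdef]; rw [div_le_one hsn0]; exact hsn1
  have hsπ : s ≤ π/2 := by nlinarith [Real.pi_gt_three]
  have hss : sn * s = 1 := by rw [hsdef]; field_simp
  have hs2 : s^2 = 1/(n:ℝ) := by
    rw [hsdef, div_pow, one_pow, hsndef, Real.sq_sqrt (by positivity)]
  have hnpos : (0:ℝ) < n := by exact_mod_cast hn
  set f : ℝ → ℝ := fun θ => (b + A * Real.cos θ)^n with hfdef
  have hfc : Continuous f := by fun_prop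
  have hint : ∀ x y : ℝ, IntervalIntegrable f MeasureTheory.volume x y :=
    fun x y => hfc.intervalIntegrable x y
  have hsplit : (∫ θ : ℝ in (-π)..π, f θ)
      = (∫ θ : ℝ in (-π)..(-s), f θ) + (∫ θ : ℝ in (-s)..s, f θ) + (∫ θ : ℝ in s..π, f θ) := by
    rw [add_assoc, intervalIntegral.integral_add_adjacent_intervals (hint (-s) s) (hint s π),
      intervalIntegral.integral_add_adjacent_intervals (hint (-π) (-s)) (hint (-s) π)]
  set m : ℝ := M - A/(2*n) with hmdef
  have hdivle : A/(2*n) ≤ A/2 := by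
    have h1 : (1:ℝ) ≤ (n:ℝ) := by exact_mod_cast hn
    rw [div_le_div_iff₀ (by positivity) (by norm_num)]
    nlinarith
  have hm0 : 0 < m := by
    rw [hmdef, hMdef]; nlinarith
  have hmid : 2*s*m^n ≤ ∫ θ : ℝ in (-s)..s, f θ := by
    have hpt : ∀ θ ∈ Set.Icc (-s) s, m ≤ b + A * Real.cos θ := by
      intro θ hθ
      have hθ2 : θ^2 ≤ 1/(n:ℝ) := by
        rw [← hs2]
        rcases hθ with ⟨h1, h2⟩
        nlinarith
      have hcos : 1 - 1/(2*n) ≤ Real.cos θ := by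
        have h0 := Real.one_sub_sq_div_two_le_cos (x := θ)
        have heq : 1/((n:ℝ))/2 = 1/(2*(n:ℝ)) := by ring
        linarith
      have hAc : A - A/(2*(n:ℝ)) ≤ A * Real.cos θ := by
        have h := mul_le_mul_of_nonneg_left hcos hA.le
        have heq : A * (1 - 1/(2*(n:ℝ))) = A - A/(2*(n:ℝ)) := by ring
        linarith
      rw [hmdef, hMdef]
      linarith
    calc 2*s*m^n = ((s - (-s)) • m^n : ℝ) := by rw [smul_eq_mul]; ring
      _ = ∫ _ : ℝ in (-s)..s, m^n := (intervalIntegral.integral_const _).symm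
      _ ≤ ∫ θ : ℝ in (-s)..s, f θ := by
          apply intervalIntegral.integral_mono_on (by linarith) intervalIntegrable_const (hint _ _)
          intro θ hθ
          exact pow_le_pow_left₀ hm0.le (hpt θ hθ) n
  have htailpt : ∀ θ : ℝ, -(r^n) ≤ f θ := fun θ => globalLB b c A hAdef n θ
  have htail1 : -(π * r^n) ≤ ∫ θ : ℝ in s..π, f θ := by
    have hsle : s ≤ π := by linarith
    calc -(π * r^n) ≤ (π - s) * (-(r^n)) := by
          have h := mul_nonneg hs0.le (pow_nonneg hr0 n); nlinarith [h]
      _ = ((π - s) • (-(r^n)) : ℝ) := by rw [smul_eq_mul]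
      _ = ∫ _ : ℝ in s..π, -(r^n) := (intervalIntegral.integral_const _).symm
      _ ≤ ∫ θ : ℝ in s..π, f θ := by
          apply intervalIntegral.integral_mono_on hsle intervalIntegrable_const (hint _ _)
          exact fun θ _ => htailpt θ
  have htail2 : -(π * r^n) ≤ ∫ θ : ℝ in (-π)..(-s), f θ := by
    have hsle : -π ≤ -s := by linarith
    calc -(π * r^n) ≤ (-s - (-π)) * (-(r^n)) := by
          have h := mul_nonneg hs0.le (pow_nonneg hr0 n); nlinarith [h]
      _ = ((-s - (-π)) • (-(r^n)) : ℝ) := by rw [smul_eq_mul]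
      _ = ∫ _ : ℝ in (-π)..(-s), -(r^n) := (intervalIntegral.integral_const _).symm
      _ ≤ ∫ θ : ℝ in (-π)..(-s), f θ := by
          apply intervalIntegral.integral_mono_on hsle intervalIntegrable_const (hint _ _)
          exact fun θ _ => htailpt θ
  have hTform : T n b c * (2*π) = ∫ θ : ℝ in (-π)..π, f θ := T_integral b c hc n
  have hT : 2*s*m^n - 2*(π * r^n) ≤ T n b c * (2*π) := by
    rw [hTform, hsplit]; linarith
  -- now the algebra
  have hhalf : M^n / 2 ≤ m^n := by
    set x : ℝ := A/(2*M) with hxdef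
    have hx : x < 1/2 := by rw [hxdef, div_lt_div_iff₀ (by positivity) (by norm_num)]; nlinarith
    have hx0 : 0 < x := by positivity
    have hxn : x/n ≤ 1/2 := by
      apply le_trans _ hx.le
      apply div_le_self hx0.le
      exact_mod_cast hn
    have hbern := one_add_mul_le_pow (a := -(x/n)) (by linarith) n
    have h1 : 1 - x ≤ (1 - x/n)^n := by
      have heq : 1 + (n:ℝ)*(-(x/n)) = 1 - x := by field_simp; ring
      rw [heq] at hbern
      simpa [sub_eq_add_neg] using hbern
    have hmM : m = M * (1 - x/n) := by
      rw [hmdef, hxdef]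
      field_simp
    rw [hmM, mul_pow]
    have hMn : (0:ℝ) < M^n := pow_pos hM n
    nlinarith [hMn, h1, hx]
  have hT : s*m^n/π - r^n ≤ T n b c := by
    have h2π : (0:ℝ) < 2*π := by positivity
    rw [← mul_le_mul_iff_of_pos_right h2π]
    calc (s*m^n/π - r^n)*(2*π) = 2*s*m^n - 2*(π*r^n) := by field_simp
      _ ≤ T n b c * (2*π) := hT
  have hsnT : m^n/π - sn*r^n ≤ sn * T n b c := by
    have h := mul_le_mul_of_nonneg_left hT hsn0.le
    have heq : sn*(s*m^n/π - r^n) = (sn*s)*(m^n/π) - sn*r^n := by ring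
    rw [hss, one_mul] at heq
    linarith
  have hrM : (r/M)^n * M^n = r^n := by
    rw [div_pow]
    field_simp
  rw [le_div_iff₀ (pow_pos hM n)]
  calc (1/(2*π) - sn*(r/M)^n)*M^n = M^n/(2*π) - sn*((r/M)^n*M^n) := by ring
    _ = M^n/(2*π) - sn*r^n := by rw [hrM]
    _ ≤ m^n/π - sn*r^n := by
        have hd : M^n/(2*π) ≤ m^n/π := by
          rw [div_le_div_iff₀ (by positivity) (by positivity)]
          nlinarith [hhalf]
        linarith
    _ ≤ sn * T n b c := hsnT

lemma crudeUpper (b c : ℝ) (hb : 0 < b) (hc : 0 < c) (n : ℕ) :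
    T n b c ≤ (b + 2*Real.sqrt c)^n := by
  have hπ := Real.pi_pos
  set A : ℝ := 2*Real.sqrt c with hAdef
  have hA : 0 < A := by positivity
  set M : ℝ := b + A with hMdef
  have hM : 0 < M := by positivity
  have hpt : ∀ θ : ℝ, (b + A * Real.cos θ)^n ≤ M^n := by
    intro θ
    have h1 : |b + A * Real.cos θ| ≤ M := by
      rw [abs_le]
      constructor
      · nlinarith [Real.neg_one_le_cos θ]
      · nlinarith [Real.cos_le_one θ]
    calc (b + A * Real.cos θ)^n ≤ |b + A * Real.cos θ|^n := by
          rw [← abs_pow]; exact le_abs_self _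
      _ ≤ M^n := pow_le_pow_left₀ (abs_nonneg _) h1 n
  have h2 : T n b c * (2*π) ≤ M^n * (2*π) := by
    rw [T_integral b c hc n]
    calc (∫ θ : ℝ in (-π)..π, (b + A * Real.cos θ)^n)
        ≤ ∫ _ : ℝ in (-π)..π, M^n := by
          apply intervalIntegral.integral_mono_on (by linarith)
            (by apply Continuous.intervalIntegrable; fun_prop) intervalIntegrable_const
          exact fun θ _ => hpt θ
      _ = (π - (-π)) • M^n := intervalIntegral.integral_const _
      _ = M^n * (2*π) := by rw [smul_eq_mul]; ring
  exact le_of_mul_le_mul_right h2 (by positivity)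

set_option maxHeartbeats 1000000 in
lemma upperBound (b c : ℝ) (hb : 0 < b) (hc : 0 < c) (n : ℕ) (hn : 1 ≤ n) :
    Real.sqrt n * T n b c / (b + 2*Real.sqrt c)^n
      ≤ 1/(2*Real.sqrt (2*(2*Real.sqrt c)/(π^2*(b + 2*Real.sqrt c))))
        + Real.sqrt n * ((max b (2*Real.sqrt c))/(b + 2*Real.sqrt c))^n := by
  have hπ := Real.pi_pos
  set A : ℝ := 2*Real.sqrt c with hAdef
  have hA : 0 < A := by positivity
  set M : ℝ := b + A with hMdef
  have hM : 0 < M := by positivity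
  set κ : ℝ := 2*A/(π^2*M) with hκdef
  have hκ : 0 < κ := by positivity
  set r2 : ℝ := max b A with hr2def
  have hr2 : 0 < r2 := lt_max_of_lt_left hb
  set sn : ℝ := Real.sqrt n with hsndef
  have hsn1 : 1 ≤ sn := by
    rw [hsndef, show (1:ℝ) = Real.sqrt 1 by simp]
    exact Real.sqrt_le_sqrt (by exact_mod_cast hn)
  have hsn0 : 0 < sn := by linarith
  have hnpos : (0:ℝ) < n := by exact_mod_cast hn
  set f : ℝ → ℝ := fun θ => (b + A * Real.cos θ)^n with hfdef
  have hfc : Continuous f := by fun_prop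
  have hint : ∀ x y : ℝ, IntervalIntegrable f MeasureTheory.volume x y :=
    fun x y => hfc.intervalIntegrable x y
  have hsplit : (∫ θ : ℝ in (-π)..π, f θ)
      = (∫ θ : ℝ in (-π)..(-(π/2)), f θ) + (∫ θ : ℝ in (-(π/2))..(π/2), f θ)
        + (∫ θ : ℝ in (π/2)..π, f θ) := by
    rw [add_assoc, intervalIntegral.integral_add_adjacent_intervals (hint (-(π/2)) (π/2)) (hint (π/2) π),
      intervalIntegral.integral_add_adjacent_intervals (hint (-π) (-(π/2))) (hint (-(π/2)) π)]
  -- pointwise middle bound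
  have hmidpt : ∀ θ ∈ Set.Icc (-(π/2)) (π/2), f θ ≤ M^n * (1/(1+n*(κ*θ^2))) := by
    intro θ hθ
    have hcosnn : 0 ≤ Real.cos θ := Real.cos_nonneg_of_mem_Icc (by simpa using hθ)
    have habs : |θ| ≤ π/2 := abs_le.2 ⟨hθ.1, hθ.2⟩
    have hjordan : 2*θ^2/π^2 ≤ 1 - Real.cos θ := by
      have ht0 : 0 ≤ |θ| := abs_nonneg θ
      have hsin : |θ|/π ≤ Real.sin (|θ|/2) := by
        have := Real.mul_le_sin (x := |θ|/2) (by positivity) (by linarith)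
        calc |θ|/π = 2/π * (|θ|/2) := by field_simp
          _ ≤ Real.sin (|θ|/2) := this
      have hsq : (|θ|/π)^2 ≤ Real.sin (|θ|/2)^2 := by
        apply pow_le_pow_left₀ (by positivity) hsin
      have hhalf : Real.sin (|θ|/2)^2 = 1/2 - Real.cos |θ|/2 := by
        have := Real.sin_sq_eq_half_sub (x := |θ|/2)
        rw [this]
        congr 2
        ring
      rw [Real.cos_abs] at hhalf
      have hexp : (|θ|/π)^2 = θ^2/π^2 := by
        rw [div_pow, sq_abs]
      rw [hexp, hhalf] at hsq
      have h2 : 2*θ^2/π^2 = 2*(θ^2/π^2) := by ring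
      rw [h2]
      linarith
    have hub : b + A * Real.cos θ ≤ M * (1 - κ*θ^2) := by
      have hMκ : M * κ = 2*A/π^2 := by rw [hκdef]; field_simp
      have h1 : A * Real.cos θ ≤ A * (1 - 2*θ^2/π^2) := by
        apply mul_le_mul_of_nonneg_left _ hA.le
        linarith
      have h2 : M * (1 - κ*θ^2) = M - (2*A/π^2)*θ^2 := by
        linear_combination (-θ^2) * hMκ
      rw [h2, hMdef]
      have h3 : A * (1 - 2*θ^2/π^2) = A - (2*A/π^2)*θ^2 := by ring
      linarith
    have hκθ : κ*θ^2 ≤ 1/2 := by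
      have hθ2 : θ^2 ≤ (π/2)^2 := by
        rw [← sq_abs]
        exact pow_le_pow_left₀ (abs_nonneg _) habs 2
      have : κ*θ^2 ≤ κ*(π/2)^2 := mul_le_mul_of_nonneg_left hθ2 hκ.le
      have hκπ : κ*(π/2)^2 = A/(2*M) := by rw [hκdef]; field_simp
      have hAM : A/(2*M) ≤ 1/2 := by
        rw [div_le_div_iff₀ (by positivity) (by norm_num)]
        nlinarith
      linarith
    have h0 : 0 ≤ b + A * Real.cos θ := by positivity
    calc f θ = (b + A * Real.cos θ)^n := rfl
      _ ≤ (M * (1 - κ*θ^2))^n := pow_le_pow_left₀ h0 hub n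
      _ = M^n * (1 - κ*θ^2)^n := mul_pow M _ n
      _ ≤ M^n * (1/(1+n*(κ*θ^2))) := by
          apply mul_le_mul_of_nonneg_left _ (pow_nonneg hM.le n)
          exact bern n (by positivity) (by linarith)
  -- integral of the majorant
  set a : ℝ := Real.sqrt (n*κ) with hadef
  have ha : 0 < a := Real.sqrt_pos.2 (by positivity)
  have ha2 : a^2 = n*κ := Real.sq_sqrt (by positivity)
  have hmajeq : ∀ θ : ℝ, 1/(1+n*(κ*θ^2)) = 1/(1+(a*θ)^2) := by
    intro θ
    congr 2
    rw [mul_pow, ha2]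
    ring
  have hIa : (∫ θ : ℝ in (-(π/2))..(π/2), 1/(1+(a*θ)^2)) ≤ π/a := by
    have hcomp := mul_integral_comp_mul_left (a := -(π/2)) (b := π/2)
      (f := fun x : ℝ => 1/(1+x^2)) (c := a)
    have harct : (∫ x : ℝ in (a*(-(π/2)))..(a*(π/2)), 1/(1+x^2))
        = Real.arctan (a*(π/2)) - Real.arctan (a*(-(π/2))) := by
      rw [← integral_one_div_one_add_sq]
    have hbnd : Real.arctan (a*(π/2)) - Real.arctan (a*(-(π/2))) ≤ π := by
      have h1 := Real.arctan_lt_pi_div_two (a*(π/2))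
      have h2 := Real.neg_pi_div_two_lt_arctan (a*(-(π/2)))
      linarith
    have : a * (∫ θ : ℝ in (-(π/2))..(π/2), 1/(1+(a*θ)^2)) ≤ π := by
      rw [hcomp, harct] at *
      exact hbnd
    rw [le_div_iff₀ ha, mul_comm]
    exact this
  have hmid : (∫ θ : ℝ in (-(π/2))..(π/2), f θ) ≤ M^n * (π/a) := by
    calc (∫ θ : ℝ in (-(π/2))..(π/2), f θ)
        ≤ ∫ θ : ℝ in (-(π/2))..(π/2), M^n * (1/(1+(a*θ)^2)) := by
          have hden : Continuous fun u : ℝ => 1 + (a*u)^2 := by fun_prop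
          have hcontmaj : Continuous fun u : ℝ => M^n * (1/(1+(a*u)^2)) :=
            continuous_const.mul (continuous_const.div hden (fun x => by positivity))
          apply intervalIntegral.integral_mono_on (by linarith) (hint _ _)
            (hcontmaj.intervalIntegrable _ _)
          intro θ hθ
          rw [← hmajeq θ]
          exact hmidpt θ hθ
      _ = M^n * ∫ θ : ℝ in (-(π/2))..(π/2), 1/(1+(a*θ)^2) := by
          rw [intervalIntegral.integral_const_mul]
      _ ≤ M^n * (π/a) := by
          apply mul_le_mul_of_nonneg_left hIa (pow_nonneg hM.le n)
  -- tail bounds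
  have htailpt : ∀ θ : ℝ, Real.cos θ ≤ 0 → f θ ≤ r2^n := by
    intro θ hcos
    have h1 : |b + A * Real.cos θ| ≤ r2 := by
      rw [abs_le]
      constructor
      · have : A * Real.cos θ ≥ -A := by nlinarith [Real.neg_one_le_cos θ]
        have : -(A:ℝ) ≤ b - A := by linarith
        have hAr2 : A ≤ r2 := le_max_right b A
        nlinarith
      · have : A * Real.cos θ ≤ 0 := mul_nonpos_of_nonneg_of_nonpos hA.le hcos
        have hbr2 : b ≤ r2 := le_max_left b A
        linarith
    calc f θ ≤ |b + A * Real.cos θ|^n := by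
          rw [← abs_pow]; exact le_abs_self _
      _ ≤ r2^n := pow_le_pow_left₀ (abs_nonneg _) h1 n
  have htail1 : (∫ θ : ℝ in (π/2)..π, f θ) ≤ (π/2) * r2^n := by
    calc (∫ θ : ℝ in (π/2)..π, f θ) ≤ ∫ _ : ℝ in (π/2)..π, r2^n := by
          apply intervalIntegral.integral_mono_on (by linarith) (hint _ _) intervalIntegrable_const
          intro θ hθ
          exact htailpt θ (Real.cos_nonpos_of_pi_div_two_le_of_le hθ.1 (by linarith [hθ.2]))
      _ = (π - π/2) • r2^n := intervalIntegral.integral_const _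
      _ = (π/2) * r2^n := by rw [smul_eq_mul]; ring
  have htail2 : (∫ θ : ℝ in (-π)..(-(π/2)), f θ) ≤ (π/2) * r2^n := by
    calc (∫ θ : ℝ in (-π)..(-(π/2)), f θ) ≤ ∫ _ : ℝ in (-π)..(-(π/2)), r2^n := by
          apply intervalIntegral.integral_mono_on (by linarith) (hint _ _) intervalIntegrable_const
          intro θ hθ
          have : Real.cos (-θ) ≤ 0 :=
            Real.cos_nonpos_of_pi_div_two_le_of_le (by linarith [hθ.2]) (by linarith [hθ.1])
          rw [Real.cos_neg] at this
          exact htailpt θ this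
      _ = (-(π/2) - (-π)) • r2^n := intervalIntegral.integral_const _
      _ = (π/2) * r2^n := by rw [smul_eq_mul]; ring
  have hT : T n b c * (2*π) ≤ M^n * (π/a) + π * r2^n := by
    rw [T_integral b c hc n, hsplit]
    have := hmid
    linarith
  -- final algebra
  have hsna : sn / a = 1/Real.sqrt κ := by
    rw [hadef, hsndef, Real.sqrt_mul (by positivity) κ]
    field_simp
  have hTb : T n b c ≤ M^n/(2*a) + r2^n/2 := by
    have h2π : (0:ℝ) < 2*π := by positivity
    apply le_of_mul_le_mul_right _ h2π
    calc T n b c * (2*π) ≤ M^n * (π/a) + π * r2^n := hT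
      _ = (M^n/(2*a) + r2^n/2) * (2*π) := by field_simp
  rw [div_le_iff₀ (pow_pos hM n)]
  have hexp : (1/(2*Real.sqrt κ) + sn * (r2/M)^n) * M^n
      = M^n/(2*Real.sqrt κ) + sn * r2^n := by
    rw [div_pow]
    field_simp
  rw [hexp]
  have h1 : sn * T n b c ≤ sn * (M^n/(2*a) + r2^n/2) :=
    mul_le_mul_of_nonneg_left hTb hsn0.le
  have h2 : sn * (M^n/(2*a)) = (sn/a) * M^n / 2 := by ring
  have h3 : (sn/a) * M^n / 2 = M^n/(2*Real.sqrt κ) := by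
    rw [hsna]; ring
  have h4 : sn * (r2^n/2) ≤ sn * r2^n := by
    have : (0:ℝ) ≤ sn * r2^n := mul_nonneg hsn0.le (pow_nonneg hr2.le n)
    nlinarith
  nlinarith [h1]

lemma sqrt_le_nat (n : ℕ) (hn : 1 ≤ n) : Real.sqrt n ≤ (n:ℝ) := by
  have h1 : (1:ℝ) ≤ (n:ℝ) := by exact_mod_cast hn
  nlinarith [Real.sq_sqrt (by positivity : (0:ℝ) ≤ (n:ℝ)), Real.sqrt_nonneg (n:ℝ)]

lemma hlow_ev (b c : ℝ) (hb : 0 < b) (hc : 0 < c) :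
    ∀ᶠ n : ℕ in atTop, 1/(4*π) ≤ Real.sqrt n * T n b c / (b + 2*Real.sqrt c)^n := by
  have hπ := Real.pi_pos
  set A : ℝ := 2*Real.sqrt c with hAdef
  have hA : 0 < A := by positivity
  set M : ℝ := b + A with hMdef
  have hM : 0 < M := by positivity
  set ρ : ℝ := |b - A| / M with hρdef
  have hρ0 : 0 ≤ ρ := by positivity
  have hρ1 : ρ < 1 := by
    rw [hρdef, div_lt_one hM]
    rcases abs_cases (b - A) with ⟨h, _⟩ | ⟨h, _⟩ <;> (rw [h, hMdef]; linarith)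
  have htend : Tendsto (fun n : ℕ => (n:ℝ) * ρ^n) atTop (nhds 0) := by
    simpa using tendsto_pow_const_mul_const_pow_of_lt_one 1 hρ0 hρ1
  have hsmall : ∀ᶠ n : ℕ in atTop, (n:ℝ) * ρ^n ≤ 1/(4*π) :=
    htend.eventually_le_const (by positivity)
  filter_upwards [hsmall, eventually_ge_atTop 1] with n hns hn1
  have hLB := lowerBound b c hb hc n hn1
  have hsq : Real.sqrt n * ρ^n ≤ (n:ℝ) * ρ^n := by
    apply mul_le_mul_of_nonneg_right (sqrt_le_nat n hn1) (pow_nonneg hρ0 n)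
  have : Real.sqrt n * ρ^n ≤ 1/(4*π) := le_trans hsq hns
  have heq : 1/(2*π) - 1/(4*π) = 1/(4*π) := by field_simp; ring
  linarith [hLB]

lemma hup_ev (b c : ℝ) (hb : 0 < b) (hc : 0 < c) :
    ∀ᶠ n : ℕ in atTop, Real.sqrt n * T n b c / (b + 2*Real.sqrt c)^n
      ≤ 1/(2*Real.sqrt (2*(2*Real.sqrt c)/(π^2*(b + 2*Real.sqrt c)))) + 1 := by
  have hπ := Real.pi_pos
  set A : ℝ := 2*Real.sqrt c with hAdef
  have hA : 0 < A := by positivity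
  set M : ℝ := b + A with hMdef
  have hM : 0 < M := by positivity
  set ρ : ℝ := (max b A) / M with hρdef
  have hρ0 : 0 ≤ ρ := by positivity
  have hρ1 : ρ < 1 := by
    rw [hρdef, div_lt_one hM]
    rw [max_lt_iff]
    constructor <;> (rw [hMdef]; linarith)
  have htend : Tendsto (fun n : ℕ => (n:ℝ) * ρ^n) atTop (nhds 0) := by
    simpa using tendsto_pow_const_mul_const_pow_of_lt_one 1 hρ0 hρ1
  have hsmall : ∀ᶠ n : ℕ in atTop, (n:ℝ) * ρ^n ≤ 1 :=
    htend.eventually_le_const (by positivity)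
  filter_upwards [hsmall, eventually_ge_atTop 1] with n hns hn1
  have hUB := upperBound b c hb hc n hn1
  have hsq : Real.sqrt n * ρ^n ≤ (n:ℝ) * ρ^n :=
    mul_le_mul_of_nonneg_right (sqrt_le_nat n hn1) (pow_nonneg hρ0 n)
  linarith [hUB]

lemma nat_rpow_inv_tendsto : Tendsto (fun k : ℕ => (k:ℝ) ^ ((1:ℝ)/k)) atTop (nhds 1) := by
  have : Tendsto ((fun x : ℝ => x ^ ((1:ℝ)/x)) ∘ (Nat.cast : ℕ → ℝ)) atTop (nhds 1) :=
    tendsto_rpow_div.comp tendsto_natCast_atTop_atTop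
  simpa [Function.comp_def] using this

lemma const_rpow_inv_tendsto (δ : ℝ) (hδ : 0 < δ) :
    Tendsto (fun k : ℕ => δ ^ ((1:ℝ)/k)) atTop (nhds 1) := by
  have h1 : Tendsto (fun k : ℕ => ((1:ℝ)/k)) atTop (nhds 0) := by
    simpa using tendsto_one_div_atTop_nhds_zero_nat (𝕜 := ℝ)
  have h2 : ContinuousAt (fun y : ℝ => δ ^ y) 0 := continuousAt_const_rpow hδ.ne'
  have := h2.tendsto.comp h1
  simpa [Real.rpow_zero, Function.comp_def] using this

lemma sqrtn_rpow_inv_tendsto : Tendsto (fun k : ℕ => (Real.sqrt k) ^ ((1:ℝ)/k)) atTop (nhds 1) := by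
  have heq : ∀ k : ℕ, (Real.sqrt k) ^ ((1:ℝ)/k) = ((k:ℝ) ^ ((1:ℝ)/k)) ^ ((1:ℝ)/2) := by
    intro k
    rw [Real.sqrt_eq_rpow, ← Real.rpow_mul (by positivity), ← Real.rpow_mul (by positivity)]
    ring_nf
  simp only [heq]
  have hc : ContinuousAt (fun y : ℝ => y ^ ((1:ℝ)/2)) 1 :=
    Real.continuousAt_rpow_const 1 _ (Or.inl one_ne_zero)
  have := hc.tendsto.comp nat_rpow_inv_tendsto
  simpa [Function.comp_def, Real.one_rpow] using this

lemma part2 (b c : ℝ) (hb : 0 < b) (hc : 0 < c) :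
    Tendsto (fun n : ℕ => (T n b c) ^ ((1 : ℝ) / n)) atTop
      (nhds (b + 2 * Real.sqrt c)) := by
  have hπ := Real.pi_pos
  set A : ℝ := 2*Real.sqrt c with hAdef
  have hA : 0 < A := by positivity
  set M : ℝ := b + A with hMdef
  have hM : 0 < M := by positivity
  set δ : ℝ := 1/(4*π) with hδdef
  have hδ : 0 < δ := by positivity
  set lo : ℕ → ℝ := fun n => (δ ^ ((1:ℝ)/n) / (Real.sqrt n) ^ ((1:ℝ)/n)) * M with hlodef
  have hlo_tendsto : Tendsto lo atTop (nhds M) := by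
    have hdiv := (const_rpow_inv_tendsto δ hδ).div sqrtn_rpow_inv_tendsto (one_ne_zero)
    norm_num at hdiv
    have h2 := hdiv.mul_const M
    rw [one_mul] at h2
    refine h2.congr fun k => ?_
    rw [hlodef]
    simp [one_div]
  apply tendsto_of_tendsto_of_tendsto_of_le_of_le' hlo_tendsto tendsto_const_nhds
  · -- lo n ≤ T^(1/n) eventually
    filter_upwards [hlow_ev b c hb hc, eventually_ge_atTop 1] with n hlow hn1
    simp only [← hAdef, ← hMdef] at hlow
    have hsn0 : (0:ℝ) < Real.sqrt n := Real.sqrt_pos.2 (by exact_mod_cast hn1)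
    have hMn : (0:ℝ) < M^n := pow_pos hM n
    have hT1 : δ * M^n / Real.sqrt n ≤ T n b c := by
      rw [le_div_iff₀ hMn] at hlow
      rw [div_le_iff₀ hsn0]
      calc δ * M^n = 1/(4*π) * M^n := by rw [hδdef]
        _ ≤ Real.sqrt n * T n b c := hlow
        _ = T n b c * Real.sqrt n := by ring
    have h0 : (0:ℝ) ≤ δ * M^n / Real.sqrt n := by positivity
    have hmono := Real.rpow_le_rpow h0 hT1 (by positivity : (0:ℝ) ≤ (1:ℝ)/n)
    have heq : (δ * M^n / Real.sqrt n) ^ ((1:ℝ)/n) = lo n := by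
      rw [hlodef]
      have h1 : δ * M^n / Real.sqrt n = (δ / Real.sqrt n) * M^n := by ring
      rw [h1, Real.mul_rpow (by positivity) (by positivity),
        Real.div_rpow hδ.le (Real.sqrt_nonneg _)]
      have h2 : ((M^n : ℝ)) ^ ((1:ℝ)/n) = M := by
        rw [← Real.rpow_natCast M n, ← Real.rpow_mul hM.le]
        rw [mul_one_div, div_self (by exact_mod_cast (by omega : n ≠ 0)), Real.rpow_one]
      rw [h2]
    rw [heq] at hmono
    exact hmono
  · -- T^(1/n) ≤ M eventually
    filter_upwards [hlow_ev b c hb hc, eventually_ge_atTop 1] with n hlow hn1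
    simp only [← hAdef, ← hMdef] at hlow
    have hsn0 : (0:ℝ) < Real.sqrt n := Real.sqrt_pos.2 (by exact_mod_cast hn1)
    have hMn : (0:ℝ) < M^n := pow_pos hM n
    have hT2 : T n b c ≤ M^n := crudeUpper b c hb hc n
    have hTnn : (0:ℝ) ≤ T n b c := by
      by_contra hneg
      push_neg at hneg
      have hd : Real.sqrt n * T n b c / M^n < 0 :=
        div_neg_of_neg_of_pos (mul_neg_of_pos_of_neg hsn0 hneg) hMn
      have := lt_of_lt_of_le (by positivity : (0:ℝ) < 1/(4*π)) hlow
      linarith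
    have := Real.rpow_le_rpow hTnn hT2 (by positivity : (0:ℝ) ≤ (1:ℝ)/n)
    have h2 : ((M^n : ℝ)) ^ ((1:ℝ)/n) = M := by
      rw [← Real.rpow_natCast M n, ← Real.rpow_mul hM.le]
      rw [mul_one_div, div_self (by exact_mod_cast (by omega : n ≠ 0)), Real.rpow_one]
    rw [h2] at this
    exact this

theorem stmt_19 (b c : ℝ) (hb : 0 < b) (hc : 0 < c) :
    0 < Filter.liminf (fun n : ℕ =>
        Real.sqrt n * T n b c / (b + 2 * Real.sqrt c) ^ n) atTop ∧
    Tendsto (fun n : ℕ => (T n b c) ^ ((1 : ℝ) / n)) atTop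
      (nhds (b + 2 * Real.sqrt c)) := by
  constructor
  · have hco : IsCoboundedUnder (· ≥ ·) atTop
        (fun n : ℕ => Real.sqrt n * T n b c / (b + 2 * Real.sqrt c) ^ n) :=
      Filter.isCoboundedUnder_ge_of_eventually_le atTop (hup_ev b c hb hc)
    have h := Filter.le_liminf_of_le hco (hlow_ev b c hb hc)
    have h0 : (0:ℝ) < 1/(4*π) := by positivity
    exact lt_of_lt_of_le h0 h
  · exact part2 b c hb hc
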